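/- For the flip J on l²(ℤ), the projection P onto nonnegative coordinates, Q = I − P, and the shifts U_n, both U_{−n} P J Q U_{−n} and U_n Q J P U_n converge K-strongly to J as n → ∞, while P J P = Q J Q = 0. -/

import Mathlib

open Filter

lemma l2Z_norm_le (σ : ℤ ≃ ℤ) (f g : lp (fun _ : ℤ => ℂ) 2)
    (h : ∀ k, ‖f (σ k)‖ ≤ ‖g k‖) : ‖f‖ ≤ ‖g‖ := by
  have hp : (0:ℝ) < (2:ENNReal).toReal := by norm_num
  rw [← Real.rpow_le_rpow_iff (norm_nonneg f) (norm_nonneg g) hp,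
    lp.norm_rpow_eq_tsum hp, lp.norm_rpow_eq_tsum hp,
    ← σ.tsum_eq (fun i => ‖f i‖ ^ (2:ENNReal).toReal)]
  refine Summable.tsum_le_tsum (fun k => Real.rpow_le_rpow (norm_nonneg _) (h k) hp.le) ?_
    ((lp.memℓp g).summable hp)
  exact (σ.summable_iff (f := fun i => ‖f i‖ ^ (2:ENNReal).toReal)).2 ((lp.memℓp f).summable hp)

lemma l2Z_op_ext (S T : lp (fun _ : ℤ => ℂ) 2 →L[ℂ] lp (fun _ : ℤ => ℂ) 2)
    (h : ∀ x k, S x k = T x k) : S = T :=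
  ContinuousLinearMap.ext fun x => lp.ext (funext (h x))

/-- The flip equiv `k ↦ -k-1` on `ℤ`. -/
def flipEquiv : ℤ ≃ ℤ :=
  ⟨fun k => -k - 1, fun k => -k - 1, fun k => by ring, fun k => by ring⟩

theorem stmt_9
    (U : ℤ → (lp (fun _ : ℤ => ℂ) 2 →L[ℂ] lp (fun _ : ℤ => ℂ) 2))
    (hU : ∀ (m : ℤ) (x : lp (fun _ : ℤ => ℂ) 2) (k : ℤ), U m x k = x (k - m))
    (P J : lp (fun _ : ℤ => ℂ) 2 →L[ℂ] lp (fun _ : ℤ => ℂ) 2)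
    (hP : ∀ (x : lp (fun _ : ℤ => ℂ) 2) (k : ℤ), P x k = if 0 ≤ k then x k else 0)
    (hJ : ∀ (x : lp (fun _ : ℤ => ℂ) 2) (k : ℤ), J x k = x (-k - 1))
    (Pn : ℕ → (lp (fun _ : ℤ => ℂ) 2 →L[ℂ] lp (fun _ : ℤ => ℂ) 2))
    (hPn : ∀ (n : ℕ) (x : lp (fun _ : ℤ => ℂ) 2) (k : ℤ),
      Pn n x k = if -(n : ℤ) ≤ k ∧ k < (n : ℤ) then x k else 0)
    (𝒦 : Set (lp (fun _ : ℤ => ℂ) 2 →L[ℂ] lp (fun _ : ℤ => ℂ) 2))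
    (h𝒦 : 𝒦 = {K | Tendsto (fun m => ‖K ∘L (1 - Pn m)‖) atTop (nhds 0) ∧
           Tendsto (fun m => ‖(1 - Pn m) ∘L K‖) atTop (nhds 0)}) :
    P ∘L J ∘L P = 0 ∧ (1 - P) ∘L J ∘L (1 - P) = 0 ∧
    (∀ K ∈ 𝒦,
      Tendsto (fun n : ℕ =>
        ‖K ∘L (U (-(n : ℤ)) ∘L P ∘L J ∘L (1 - P) ∘L U (-(n : ℤ)) - J)‖) atTop (nhds 0) ∧
      Tendsto (fun n : ℕ =>
        ‖(U (-(n : ℤ)) ∘L P ∘L J ∘L (1 - P) ∘L U (-(n : ℤ)) - J) ∘L K‖) atTop (nhds 0)) ∧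
    (∀ K ∈ 𝒦,
      Tendsto (fun n : ℕ =>
        ‖K ∘L (U (n : ℤ) ∘L (1 - P) ∘L J ∘L P ∘L U (n : ℤ) - J)‖) atTop (nhds 0) ∧
      Tendsto (fun n : ℕ =>
        ‖(U (n : ℤ) ∘L (1 - P) ∘L J ∘L P ∘L U (n : ℤ) - J) ∘L K‖) atTop (nhds 0)) := by
  -- coordinate formulas for the complementary projections
  have hQ : ∀ (x : lp (fun _ : ℤ => ℂ) 2) (k : ℤ),
      (1 - P) x k = if 0 ≤ k then 0 else x k := by
    intro x k
    rw [ContinuousLinearMap.sub_apply, lp.coeFn_sub, Pi.sub_apply,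
      ContinuousLinearMap.one_apply, hP]
    split_ifs <;> simp
  have hQn : ∀ (n : ℕ) (x : lp (fun _ : ℤ => ℂ) 2) (k : ℤ),
      (1 - Pn n) x k = if -(n : ℤ) ≤ k ∧ k < (n : ℤ) then 0 else x k := by
    intro n x k
    rw [ContinuousLinearMap.sub_apply, lp.coeFn_sub, Pi.sub_apply,
      ContinuousLinearMap.one_apply, hPn]
    split_ifs <;> simp
  -- coordinate formulas of the two approximating differences
  set A : ℕ → (lp (fun _ : ℤ => ℂ) 2 →L[ℂ] lp (fun _ : ℤ => ℂ) 2) :=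
    fun n => U (-(n : ℤ)) ∘L P ∘L J ∘L (1 - P) ∘L U (-(n : ℤ)) - J with hAdef
  set B : ℕ → (lp (fun _ : ℤ => ℂ) 2 →L[ℂ] lp (fun _ : ℤ => ℂ) 2) :=
    fun n => U (n : ℤ) ∘L (1 - P) ∘L J ∘L P ∘L U (n : ℤ) - J with hBdef
  have hA : ∀ (n : ℕ) x (k : ℤ), A n x k = if k < -(n:ℤ) then -(x (-k-1)) else 0 := by
    intro n x k
    rw [hAdef]
    rw [ContinuousLinearMap.sub_apply, lp.coeFn_sub, Pi.sub_apply]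
    simp only [ContinuousLinearMap.comp_apply]
    rw [hU, hP, hJ, hQ, hU, hJ]
    split_ifs <;>
      first
        | omega
        | ring1
        | (rw [show -(k - - (n:ℤ)) - 1 - -(n:ℤ) = -k - 1 by ring]; ring)
  have hB : ∀ (n : ℕ) x (k : ℤ), B n x k = if (n:ℤ) ≤ k then -(x (-k-1)) else 0 := by
    intro n x k
    rw [hBdef]
    rw [ContinuousLinearMap.sub_apply, lp.coeFn_sub, Pi.sub_apply]
    simp only [ContinuousLinearMap.comp_apply]
    rw [hU, hQ, hJ, hP, hU, hJ]
    split_ifs <;>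
      first
        | omega
        | ring1
        | (rw [show -(k - (n:ℤ)) - 1 - (n:ℤ) = -k - 1 by ring]; ring)
  -- uniform norm bounds
  have hnormle : ∀ (T : lp (fun _ : ℤ => ℂ) 2 →L[ℂ] lp (fun _ : ℤ => ℂ) 2),
      (∀ x (k : ℤ), T x k = 0 ∨ T x k = -(x (-k-1))) → ‖T‖ ≤ 1 := by
    intro T hT
    refine ContinuousLinearMap.opNorm_le_bound T zero_le_one fun x => ?_
    rw [one_mul]
    refine l2Z_norm_le flipEquiv (T x) x fun k => ?_
    rcases hT x (flipEquiv k) with h | h <;> rw [h]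
    · simp
    · have : -(flipEquiv k : ℤ) - 1 = k := by (simp [flipEquiv]; try ring)
      rw [this, norm_neg]
  have hAle : ∀ n, ‖A n‖ ≤ 1 := by
    intro n
    refine hnormle _ fun x k => ?_
    rw [hA]; split_ifs <;> simp
  have hBle : ∀ n, ‖B n‖ ≤ 1 := by
    intro n
    refine hnormle _ fun x k => ?_
    rw [hB]; split_ifs <;> simp
  -- factorization through 1 - Pn n
  have hAL : ∀ n, A n = (1 - Pn n) ∘L A n := by
    intro n
    refine (l2Z_op_ext _ _ fun x k => ?_)
    rw [ContinuousLinearMap.comp_apply, hQn, hA]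
    split_ifs <;> first | rfl | omega
  have hAR : ∀ n, A n = A n ∘L (1 - Pn n) := by
    intro n
    refine (l2Z_op_ext _ _ fun x k => ?_)
    rw [ContinuousLinearMap.comp_apply, hA, hA, hQn]
    split_ifs <;> first | rfl | omega
  have hBL : ∀ n, B n = (1 - Pn n) ∘L B n := by
    intro n
    refine (l2Z_op_ext _ _ fun x k => ?_)
    rw [ContinuousLinearMap.comp_apply, hQn, hB]
    split_ifs <;> first | rfl | omega
  have hBR : ∀ n, B n = B n ∘L (1 - Pn n) := by
    intro n
    refine (l2Z_op_ext _ _ fun x k => ?_)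
    rw [ContinuousLinearMap.comp_apply, hB, hB, hQn]
    split_ifs <;> first | rfl | omega
  -- generic convergence argument
  have key : ∀ (T : ℕ → (lp (fun _ : ℤ => ℂ) 2 →L[ℂ] lp (fun _ : ℤ => ℂ) 2)),
      (∀ n, ‖T n‖ ≤ 1) → (∀ n, T n = (1 - Pn n) ∘L T n) → (∀ n, T n = T n ∘L (1 - Pn n)) →
      ∀ K ∈ 𝒦, Tendsto (fun n : ℕ => ‖K ∘L T n‖) atTop (nhds 0) ∧
        Tendsto (fun n : ℕ => ‖T n ∘L K‖) atTop (nhds 0) := by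
    intro T hle hL hR K hK
    rw [h𝒦] at hK
    constructor
    · refine squeeze_zero (fun n => norm_nonneg _) (fun n => ?_) hK.1
      calc ‖K ∘L T n‖ = ‖(K ∘L (1 - Pn n)) ∘L T n‖ := by
            rw [ContinuousLinearMap.comp_assoc, ← hL n]
        _ ≤ ‖K ∘L (1 - Pn n)‖ * ‖T n‖ := ContinuousLinearMap.opNorm_comp_le _ _
        _ ≤ ‖K ∘L (1 - Pn n)‖ := mul_le_of_le_one_right (norm_nonneg _) (hle n)
    · refine squeeze_zero (fun n => norm_nonneg _) (fun n => ?_) hK.2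
      calc ‖T n ∘L K‖ = ‖T n ∘L ((1 - Pn n) ∘L K)‖ := by
            rw [← ContinuousLinearMap.comp_assoc, ← hR n]
        _ ≤ ‖T n‖ * ‖(1 - Pn n) ∘L K‖ := ContinuousLinearMap.opNorm_comp_le _ _
        _ ≤ ‖(1 - Pn n) ∘L K‖ := mul_le_of_le_one_left (norm_nonneg _) (hle n)
  refine ⟨?_, ?_, key A hAle hAL hAR, key B hBle hBL hBR⟩
  · refine (l2Z_op_ext _ _ fun x k => ?_)
    simp only [ContinuousLinearMap.comp_apply, ContinuousLinearMap.zero_apply]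
    rw [hP, hJ, hP]
    split_ifs <;> first | rfl | omega | simp
  · refine (l2Z_op_ext _ _ fun x k => ?_)
    simp only [ContinuousLinearMap.comp_apply, ContinuousLinearMap.zero_apply]
    rw [hQ, hJ, hQ]
    split_ifs <;> first | rfl | omega | simp
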